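/- arXiv:2304.07749 — 3 statements merged into one kernel-verified Lean document; each statement's English description precedes it below -/
import Mathlib

section
/- Let k ≥ 1, n = 2k, let W be a module over the symplectic Lie algebra 𝔰𝔭_{2k}(ℂ), and fix ζ ∈ ℂⁿ. For r ∈ ℤⁿ define the linear operator ρ(r) : W → W by ρ(r)(w) = (r·r̄ᵀ)·w + ⟨r̄, ζ⟩·w, where (r·r̄ᵀ)·w denotes the action of the matrix r·r̄ᵀ ∈ 𝔰𝔭_{2k}(ℂ) on W. Then for all r, s ∈ ℤⁿ the operators satisfy [ρ(r), ρ(s)] = ⟨r̄, s⟩ · ( ρ(r+s) − ρ(r) − ρ(s) ). (These are exactly the defining bracket relations of the Lie algebra H'_n(m) with basis {I(r̄,r)}, so every 𝔰𝔭_{2k}(ℂ)-module becomes an H'_n(m)-module in this way.) -/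
noncomputable section

open scoped BigOperators Matrix

attribute [local instance 100] LieRing.ofAssociativeRing

/-- For `r ∈ ℂ^{2k}` (indexed by `Fin k ⊕ Fin k`), `bar r = r̄ = (r_{k+1},…,r_{2k},−r_1,…,−r_k)`. -/
def bar {k : ℕ} (r : Fin k ⊕ Fin k → ℂ) : Fin k ⊕ Fin k → ℂ :=
  Sum.elim (fun i => r (Sum.inr i)) (fun i => - r (Sum.inl i))

/-- The standard symmetric bilinear form `⟨u, v⟩ = ∑ i, u i * v i` on `ℂ^{2k}`. -/
def pair {k : ℕ} (u v : Fin k ⊕ Fin k → ℂ) : ℂ := ∑ i, u i * v i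

/-- The coercion `ℤ^{2k} ⊆ ℂ^{2k}`. -/
def zc {k : ℕ} (r : Fin k ⊕ Fin k → ℤ) : Fin k ⊕ Fin k → ℂ := fun i => (r i : ℂ)

/-- The standard symplectic structure matrix `J = [[0, I_k],[−I_k, 0]]`. -/
def Jmat (k : ℕ) : Matrix (Fin k ⊕ Fin k) (Fin k ⊕ Fin k) ℂ :=
  Matrix.fromBlocks 0 1 (-1) 0

/-- The symplectic Lie algebra `𝔰𝔭_{2k}(ℂ) = {A : Aᵀ J + J A = 0}`. -/
def sp (k : ℕ) : LieSubalgebra ℂ (Matrix (Fin k ⊕ Fin k) (Fin k ⊕ Fin k) ℂ) :=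
  skewAdjointMatricesLieSubalgebra (Jmat k)

/-- The outer product `r·r̄ᵀ` lies in `𝔰𝔭_{2k}(ℂ)`. -/
lemma outer_mem_sp (k : ℕ) (r : Fin k ⊕ Fin k → ℂ) :
    Matrix.vecMulVec r (bar r) ∈ sp k := by
  rw [sp, mem_skewAdjointMatricesLieSubalgebra, mem_skewAdjointMatricesSubmodule]
  show _ᵀ * Jmat k = Jmat k * _
  ext i j
  simp only [Matrix.mul_apply, Matrix.transpose_apply, Matrix.vecMulVec_apply, Jmat,
    Matrix.fromBlocks, Fintype.sum_sum_type, Matrix.neg_apply, Matrix.one_apply,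
    Matrix.zero_apply, Matrix.of_apply, bar]
  cases i <;> cases j <;>
    simp [Sum.elim, Matrix.one_apply, Finset.sum_ite_eq, Finset.sum_ite_eq', mul_comm]


lemma bar_add {k : ℕ} (u v : Fin k ⊕ Fin k → ℂ) : bar (u + v) = bar u + bar v := by
  funext i; cases i <;> simp [bar] <;> ring

lemma zc_add {k : ℕ} (r s : Fin k ⊕ Fin k → ℤ) : zc (r + s) = zc r + zc s := by
  funext i; simp [zc]

lemma pair_add_left {k : ℕ} (u v w : Fin k ⊕ Fin k → ℂ) :
    pair (u + v) w = pair u w + pair v w := by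
  simp [pair, add_mul, Finset.sum_add_distrib]

lemma pair_bar_skew {k : ℕ} (u v : Fin k ⊕ Fin k → ℂ) :
    pair (bar v) u = - pair (bar u) v := by
  rw [pair, pair, Fintype.sum_sum_type, Fintype.sum_sum_type]
  simp only [bar, Sum.elim_inl, Sum.elim_inr, neg_mul]
  rw [neg_add, ← Finset.sum_neg_distrib, ← Finset.sum_neg_distrib]
  rw [add_comm]
  congr 1 <;> exact Finset.sum_congr rfl (fun i _ => by ring)

lemma vmv_mul {k : ℕ} (u v x y : Fin k ⊕ Fin k → ℂ) :
    Matrix.vecMulVec u v * Matrix.vecMulVec x y = pair v x • Matrix.vecMulVec u y := by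
  ext i j
  simp only [Matrix.mul_apply, Matrix.vecMulVec_apply, Matrix.smul_apply, pair,
    smul_eq_mul, Finset.sum_mul]
  exact Finset.sum_congr rfl (fun l _ => by ring)

lemma vmv_add_left {k : ℕ} (u v w : Fin k ⊕ Fin k → ℂ) :
    Matrix.vecMulVec (u + v) w = Matrix.vecMulVec u w + Matrix.vecMulVec v w := by
  ext i j; simp [Matrix.vecMulVec_apply, add_mul]

lemma vmv_add_right {k : ℕ} (u v w : Fin k ⊕ Fin k → ℂ) :
    Matrix.vecMulVec u (v + w) = Matrix.vecMulVec u v + Matrix.vecMulVec u w := by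
  ext i j; simp [Matrix.vecMulVec_apply, mul_add]

lemma key_bracket {k : ℕ} (u v : Fin k ⊕ Fin k → ℂ) :
    ⁅Matrix.vecMulVec u (bar u), Matrix.vecMulVec v (bar v)⁆ =
      pair (bar u) v • (Matrix.vecMulVec (u + v) (bar (u + v))
        - Matrix.vecMulVec u (bar u) - Matrix.vecMulVec v (bar v)) := by
  rw [Ring.lie_def, vmv_mul, vmv_mul, pair_bar_skew u v, bar_add,
    vmv_add_left, vmv_add_right, vmv_add_right]
  simp only [neg_smul, sub_neg_eq_add]
  rw [smul_sub, smul_sub, smul_add, smul_add, smul_add]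
  abel

/-- if `W` is a module over `𝔰𝔭_{2k}(ℂ)` (given by the Lie algebra morphism
`act : 𝔰𝔭_{2k}(ℂ) → End(W)`), `ζ ∈ ℂⁿ`, and `ρ(r) = (r·r̄ᵀ)·(-) + ⟨r̄,ζ⟩·id` for `r ∈ ℤⁿ`,
then `[ρ(r), ρ(s)] = ⟨r̄,s⟩ (ρ(r+s) − ρ(r) − ρ(s))`. -/
theorem stmt7 (k : ℕ) (hk : 1 ≤ k) (W : Type*) [AddCommGroup W] [Module ℂ W]
    (act : sp k →ₗ⁅ℂ⁆ Module.End ℂ W) (ζ : Fin k ⊕ Fin k → ℂ)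
    (ρ : (Fin k ⊕ Fin k → ℤ) → Module.End ℂ W)
    (hρ : ∀ r : Fin k ⊕ Fin k → ℤ,
      ρ r = act ⟨Matrix.vecMulVec (zc r) (bar (zc r)), outer_mem_sp k (zc r)⟩
              + pair (bar (zc r)) ζ • (1 : Module.End ℂ W)) :
    ∀ r s : Fin k ⊕ Fin k → ℤ,
      ⁅ρ r, ρ s⁆ = pair (bar (zc r)) (zc s) • (ρ (r + s) - ρ r - ρ s) := by
  intro r s
  have hz : zc (r + s) = zc r + zc s := zc_add r s
  set u := zc r
  set v := zc s
  set X : sp k := ⟨Matrix.vecMulVec u (bar u), outer_mem_sp k u⟩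
  set Y : sp k := ⟨Matrix.vecMulVec v (bar v), outer_mem_sp k v⟩
  set Z : sp k := ⟨Matrix.vecMulVec (zc (r+s)) (bar (zc (r+s))), outer_mem_sp k (zc (r+s))⟩
  have hXY : ⁅X, Y⁆ = pair (bar u) v • (Z - X - Y) := by
    apply Subtype.ext
    have h := key_bracket u v
    rw [← hz] at h
    simpa only [LieSubalgebra.coe_bracket, AddSubgroupClass.coe_sub, SetLike.val_smul,
      X, Y, Z] using h
  have hpairζ : pair (bar (zc (r+s))) ζ = pair (bar u) ζ + pair (bar v) ζ := by
    rw [hz, bar_add, pair_add_left]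
  rw [hρ, hρ, hρ]
  have h1 : ∀ (A : Module.End ℂ W) (c : ℂ), ⁅A, c • (1 : Module.End ℂ W)⁆ = 0 := by
    intro A c; simp [Ring.lie_def, mul_comm]
  have h2 : ∀ (A : Module.End ℂ W) (c : ℂ), ⁅c • (1 : Module.End ℂ W), A⁆ = 0 := by
    intro A c; simp [Ring.lie_def, mul_comm]
  rw [lie_add, add_lie, add_lie, h1, h2, h2 _ _]
  rw [← act.map_lie, hXY, map_smul act, map_sub act, map_sub act]
  rw [hpairζ]
  module
end
end

section
/- Let k ≥ 1, n = 2k, fix positive integers m_1,…,m_n and let Γ = {r ∈ ℤⁿ : m_i divides r_i for all i}. Let W be a nonzero finite-dimensional ℂ-vector space and let I : Γ → End(W) satisfy I(0) = 0 and [I(r), I(s)] = ⟨r̄,s⟩ (I(r+s) − I(r) − I(s)) for all r, s ∈ Γ, and suppose W is irreducible for this family, i.e. the only subspaces of W invariant under all I(r) are 0 and W. Fix α, β ∈ ℂⁿ, and on L(W) = W ⊗ ℂ[Γ] (with pure tensors w ⊗ t^k, k ∈ Γ) define linear operators: for 0 ≠ r ∈ Γ, π(r)(w ⊗ t^k) =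 (I(r)w) ⊗ t^{r+k} + ⟨r̄, β + k⟩ w ⊗ t^{r+k}; for u ∈ ℂⁿ, δ(u)(w ⊗ t^k) = ⟨u, α + k⟩ w ⊗ t^k; and for r ∈ Γ, μ(r)(w ⊗ t^k) = w ⊗ t^{r+k}. Then the only subspaces of L(W) invariant under all of the operators π(r) (0 ≠ r ∈ Γ), δ(u) (u ∈ ℂⁿ) and μ(r) (r ∈ Γ) are 0 and L(W). -/
noncomputable section

open scoped BigOperators

/-- For `r ∈ ℤ^{2k}` (indexed by `Fin k ⊕ Fin k`), `barZ r = r̄ = (r_{k+1},…,r_{2k},−r_1,…,−r_k)`. -/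
def barZ {k : ℕ} (r : Fin k ⊕ Fin k → ℤ) : Fin k ⊕ Fin k → ℤ :=
  Sum.elim (fun i => r (Sum.inr i)) (fun i => - r (Sum.inl i))

/-- The standard pairing `⟨u,v⟩ = ∑ i, u i * v i` of integer vectors, valued in `ℂ`. -/
def pairZ {k : ℕ} (u v : Fin k ⊕ Fin k → ℤ) : ℂ := ∑ i, (u i : ℂ) * (v i : ℂ)

/-- The lattice `Γ = {r ∈ ℤⁿ : m_i ∣ r_i for all i}`. -/
def Gamma (k : ℕ) (m : Fin k ⊕ Fin k → ℕ) : AddSubgroup (Fin k ⊕ Fin k → ℤ) where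
  carrier := {r | ∀ i, (m i : ℤ) ∣ r i}
  add_mem' := by
    intro a b ha hb i
    simpa using dvd_add (ha i) (hb i)
  zero_mem' := by
    intro i
    simp
  neg_mem' := by
    intro a ha i
    simpa using (ha i).neg_right

/-- `π(r)`, for `0 ≠ r ∈ Γ`:  on `L(W) = W ⊗ ℂ[Γ]` (realized as `Γ →₀ W`),
`π(r)(w ⊗ t^p) = (I(r)w) ⊗ t^{r+p} + ⟨r̄, β + p⟩ w ⊗ t^{r+p}`. -/
def piOp {k : ℕ} {m : Fin k ⊕ Fin k → ℕ} {W : Type*} [AddCommGroup W] [Module ℂ W]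
    (I : Gamma k m → Module.End ℂ W) (β : Fin k ⊕ Fin k → ℂ) (r : Gamma k m) :
    (Gamma k m →₀ W) →ₗ[ℂ] (Gamma k m →₀ W) :=
  Finsupp.lsum ℂ fun p : Gamma k m =>
    Finsupp.lsingle (r + p) ∘ₗ
      (I r + (∑ i, (barZ (r : Fin k ⊕ Fin k → ℤ) i : ℂ) *
        (β i + ((p : Fin k ⊕ Fin k → ℤ) i : ℂ))) • (LinearMap.id : W →ₗ[ℂ] W))

/-- `δ(u)`, for `u ∈ ℂⁿ`: `δ(u)(w ⊗ t^p) = ⟨u, α + p⟩ w ⊗ t^p`. -/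
def deltaOp {k : ℕ} {m : Fin k ⊕ Fin k → ℕ} (W : Type*) [AddCommGroup W] [Module ℂ W]
    (α : Fin k ⊕ Fin k → ℂ) (u : Fin k ⊕ Fin k → ℂ) :
    (Gamma k m →₀ W) →ₗ[ℂ] (Gamma k m →₀ W) :=
  Finsupp.lsum ℂ fun p : Gamma k m =>
    (∑ i, u i * (α i + ((p : Fin k ⊕ Fin k → ℤ) i : ℂ))) • Finsupp.lsingle p

/-- `μ(r)`, for `r ∈ Γ`: `μ(r)(w ⊗ t^p) = w ⊗ t^{r+p}` (multiplication by the monomial `t^r`). -/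
def muOp {k : ℕ} {m : Fin k ⊕ Fin k → ℕ} (W : Type*) [AddCommGroup W] [Module ℂ W]
    (r : Gamma k m) : (Gamma k m →₀ W) →ₗ[ℂ] (Gamma k m →₀ W) :=
  Finsupp.lsum ℂ fun p : Gamma k m => (Finsupp.lsingle (r + p) : W →ₗ[ℂ] Gamma k m →₀ W)

/- Auxiliary computation lemmas. -/

lemma piOp_single {k : ℕ} {m : Fin k ⊕ Fin k → ℕ} {W : Type*} [AddCommGroup W] [Module ℂ W]
    (I : Gamma k m → Module.End ℂ W) (β : Fin k ⊕ Fin k → ℂ) (r p : Gamma k m) (w : W) :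
    piOp I β r (Finsupp.single p w) =
      Finsupp.single (r + p) (I r w + (∑ i, (barZ (r : Fin k ⊕ Fin k → ℤ) i : ℂ) *
        (β i + ((p : Fin k ⊕ Fin k → ℤ) i : ℂ))) • w) := by
  rw [piOp, Finsupp.lsum_single]
  simp

lemma muOp_single {k : ℕ} {m : Fin k ⊕ Fin k → ℕ} {W : Type*} [AddCommGroup W] [Module ℂ W]
    (r p : Gamma k m) (w : W) :
    muOp W r (Finsupp.single p w) = Finsupp.single (r + p) w := by
  rw [muOp, Finsupp.lsum_single, Finsupp.lsingle_apply]

lemma deltaOp_apply_coeff {k : ℕ} {m : Fin k ⊕ Fin k → ℕ} {W : Type*} [AddCommGroup W]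
    [Module ℂ W] (α u : Fin k ⊕ Fin k → ℂ) (f : Gamma k m →₀ W) (s : Gamma k m) :
    (deltaOp W α u f) s = (∑ i, u i * (α i + ((s : Fin k ⊕ Fin k → ℤ) i : ℂ))) • f s := by
  rw [deltaOp, Finsupp.lsum_apply, Finsupp.sum_apply, Finsupp.sum]
  simp only [LinearMap.smul_apply, Finsupp.lsingle_apply, Finsupp.smul_apply,
    Finsupp.single_apply]
  rw [Finset.sum_eq_single s]
  · simp
  · intro b _ hb; simp [hb]
  · intro h; simp [Finsupp.notMem_support_iff.mp h]

/-- if `W` is a nonzero finite dimensional irreducible module for the family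
`I(r)` (satisfying `I(0) = 0` and `[I(r),I(s)] = ⟨r̄,s⟩(I(r+s) − I(r) − I(s))`), then for any
`α, β ∈ ℂⁿ` the only subspaces of `L(W) = W ⊗ ℂ[Γ]` invariant under all the operators
`π(r)` (`0 ≠ r ∈ Γ`), `δ(u)` (`u ∈ ℂⁿ`) and `μ(r)` (`r ∈ Γ`) are `0` and `L(W)`. -/
theorem stmt8 (k : ℕ) (hk : 1 ≤ k) (m : Fin k ⊕ Fin k → ℕ) (hm : ∀ i, 0 < m i)
    (W : Type*) [AddCommGroup W] [Module ℂ W] [FiniteDimensional ℂ W] [Nontrivial W]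
    (I : Gamma k m → Module.End ℂ W) (hI0 : I 0 = 0)
    (hbr : ∀ r s : Gamma k m,
      ⁅I r, I s⁆ = pairZ (barZ (r : Fin k ⊕ Fin k → ℤ)) (s : Fin k ⊕ Fin k → ℤ) •
        (I (r + s) - I r - I s))
    (hirr : ∀ U : Submodule ℂ W, (∀ r : Gamma k m, ∀ w ∈ U, I r w ∈ U) → U = ⊥ ∨ U = ⊤)
    (α β : Fin k ⊕ Fin k → ℂ) :
    ∀ U : Submodule ℂ (Gamma k m →₀ W),
      (∀ r : Gamma k m, r ≠ 0 → ∀ f ∈ U, piOp I β r f ∈ U) →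
      (∀ u : Fin k ⊕ Fin k → ℂ, ∀ f ∈ U, deltaOp W α u f ∈ U) →
      (∀ r : Gamma k m, ∀ f ∈ U, muOp W r f ∈ U) →
      U = ⊥ ∨ U = ⊤ := by
  intro U hπ hδ hμ
  by_cases hU : U = ⊥
  · exact Or.inl hU
  right
  -- Step 1: U contains a nonzero "pure tensor" `single p w`.
  have key : ∀ n : ℕ, ∀ f : Gamma k m →₀ W, f ∈ U → f ≠ 0 → f.support.card ≤ n →
      ∃ p : Gamma k m, ∃ w : W, w ≠ 0 ∧ Finsupp.single p w ∈ U := by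
    intro n
    induction n with
    | zero =>
      intro f hfU hf hcard
      exfalso
      apply hf
      have : f.support = ∅ := Finset.card_eq_zero.mp (Nat.le_zero.mp hcard)
      exact Finsupp.support_eq_empty.mp this
    | succ n ih =>
      intro f hfU hf hcard
      rcases eq_or_lt_of_le (Nat.one_le_iff_ne_zero.mpr
        (by simpa [Finsupp.card_support_eq_zero] using hf : f.support.card ≠ 0)) with h1 | h1
      · -- support has exactly one element
        obtain ⟨a, ha, hfa⟩ := Finsupp.card_support_eq_one.mp h1.symm
        exact ⟨a, f a, ha, hfa ▸ hfU⟩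
      · -- at least two elements in the support
        obtain ⟨p, hp, q, hq, hpq⟩ := Finset.one_lt_card.mp h1
        -- find a coordinate where p and q differ
        have hcoord : ∃ i₀, ((p : Fin k ⊕ Fin k → ℤ) i₀) ≠ ((q : Fin k ⊕ Fin k → ℤ) i₀) := by
          by_contra hco
          push_neg at hco
          exact hpq (Subtype.ext (funext hco))
        obtain ⟨i₀, hi₀⟩ := hcoord
        set u : Fin k ⊕ Fin k → ℂ := fun i => if i = i₀ then 1 else 0 with hu
        have hsum : ∀ s : Gamma k m,
            (∑ i, u i * (α i + ((s : Fin k ⊕ Fin k → ℤ) i : ℂ))) =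
              α i₀ + ((s : Fin k ⊕ Fin k → ℤ) i₀ : ℂ) := by
          intro s
          rw [hu]
          simp [ite_mul, Finset.sum_ite_eq']
        set lamq : ℂ := α i₀ + ((q : Fin k ⊕ Fin k → ℤ) i₀ : ℂ) with hlamq
        set g : Gamma k m →₀ W := deltaOp W α u f - lamq • f with hg
        have hgU : g ∈ U := sub_mem (hδ u f hfU) (Submodule.smul_mem U lamq hfU)
        have hgcoeff : ∀ s : Gamma k m,
            g s = ((((s : Fin k ⊕ Fin k → ℤ) i₀ : ℂ)) - ((q : Fin k ⊕ Fin k → ℤ) i₀ : ℂ)) • f s := by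
          intro s
          rw [hg]
          simp only [Finsupp.sub_apply, Finsupp.smul_apply, deltaOp_apply_coeff, hsum s]
          rw [hlamq]
          module
        have hgq : g q = 0 := by rw [hgcoeff q]; simp
        have hgp : g p ≠ 0 := by
          rw [hgcoeff p]
          refine smul_ne_zero ?_ (Finsupp.mem_support_iff.mp hp)
          simpa [sub_eq_zero] using fun hc => hi₀ (by exact_mod_cast hc)
        have hgsupp : g.support ⊆ f.support.erase q := by
          intro s hs
          rw [Finset.mem_erase]
          refine ⟨?_, ?_⟩
          · rintro rfl; exact Finsupp.mem_support_iff.mp hs hgq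
          · rw [Finsupp.mem_support_iff] at hs ⊢
            intro hzero
            exact hs (by rw [hgcoeff s, hzero, smul_zero])
        have hgne : g ≠ 0 := fun hc => hgp (by rw [hc]; rfl)
        have hcard' : g.support.card ≤ n := by
          have h2 := Finset.card_le_card hgsupp
          rw [Finset.card_erase_of_mem hq] at h2
          omega
        exact ih g hgU hgne hcard'
  obtain ⟨f, hfU, hf⟩ : ∃ f : Gamma k m →₀ W, f ∈ U ∧ f ≠ 0 := by
    by_contra hc
    push_neg at hc
    exact hU (by
      ext x
      simp only [Submodule.mem_bot]
      constructor
      · intro hx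
        by_contra hne
        exact hne (hc x hx)
      · rintro rfl; exact U.zero_mem)
  obtain ⟨p, w, hw, hsw⟩ := key f.support.card f hfU hf le_rfl
  -- Step 2: the set V = {w | single 0 w ∈ U} is an I-invariant subspace of W.
  set V : Submodule ℂ W := U.comap (Finsupp.lsingle (0 : Gamma k m)) with hV
  have hVmem : ∀ x : W, x ∈ V ↔ Finsupp.single (0 : Gamma k m) x ∈ U := by
    intro x
    rw [hV]
    simp [Submodule.mem_comap]
  have hsingle_mem : ∀ (s : Gamma k m) (x : W), x ∈ V → Finsupp.single s x ∈ U := by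
    intro s x hx
    have := hμ s _ ((hVmem x).mp hx)
    rwa [muOp_single, add_zero] at this
  have hVinv : ∀ r : Gamma k m, ∀ x ∈ V, I r x ∈ V := by
    intro r x hx
    by_cases hr : r = 0
    · rw [hr, hI0]
      simpa using V.zero_mem
    · -- π(r) applied to single 0 x
      have h1 := hπ r hr _ ((hVmem x).mp hx)
      rw [piOp_single] at h1
      set c : ℂ := ∑ i, (barZ (r : Fin k ⊕ Fin k → ℤ) i : ℂ) *
        (β i + (((0 : Gamma k m) : Fin k ⊕ Fin k → ℤ) i : ℂ)) with hc
      have h2 : Finsupp.single (r + 0) (c • x) ∈ U := by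
        have := hsingle_mem (r + 0) x hx
        have h3 := Submodule.smul_mem U c this
        rwa [Finsupp.smul_single] at h3
      have h4 : Finsupp.single (r + 0) (I r x) ∈ U := by
        have h5 := sub_mem h1 h2
        rwa [← Finsupp.single_sub, add_sub_cancel_right] at h5
      -- shift back to 0 using μ(-r)
      have h6 := hμ (-r) _ h4
      rw [muOp_single] at h6
      rw [hVmem]
      convert h6 using 2
      abel
  -- Step 3: V is nonzero (contains w), hence V = ⊤.
  have hwV : w ∈ V := by
    rw [hVmem]
    have := hμ (-p) _ hsw
    rw [muOp_single] at this
    convert this using 2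
    abel
  have hVtop : V = ⊤ := by
    rcases hirr V hVinv with hbot | htop
    · exact absurd (hbot ▸ hwV) (by simpa using hw)
    · exact htop
  -- Step 4: all singles are in U, hence U = ⊤.
  rw [eq_top_iff]
  intro g _
  induction g using Finsupp.induction with
  | zero => exact U.zero_mem
  | single_add a b f _ _ ihf =>
    exact add_mem (hsingle_mem a b (hVtop ▸ Submodule.mem_top)) (ihf trivial)
end
end

section
/- Let k ≥ 1 and fix positive integers m_1,…,m_{2k}; let Γ = {r ∈ ℤ^{2k} : m_i divides r_i for all i}. Then the ℂ-linear span of the outer-product matrices { r·r̄ᵀ : r ∈ Γ } is the full symplectic Lie algebra 𝔰𝔭_{2k}(ℂ). -/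
noncomputable section

open scoped BigOperators Matrix

namespace Stmt12Aux

variable {k : ℕ}

lemma bar_add (x y : Fin k ⊕ Fin k → ℂ) : bar (x + y) = bar x + bar y := by
  funext p; cases p <;> simp [bar] <;> ring

lemma bar_neg (x : Fin k ⊕ Fin k → ℂ) : bar (-x) = -(bar x) := by
  funext p; cases p <;> simp [bar]

lemma bar_bar (x : Fin k ⊕ Fin k → ℂ) : bar (bar x) = -x := by
  funext p; cases p <;> simp [bar]

lemma sumJ_left (v : Fin k ⊕ Fin k → ℂ) (p : Fin k ⊕ Fin k) :
    ∑ c, Jmat k p c * v c = bar v p := by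
  cases p <;>
    simp [Jmat, Fintype.sum_sum_type, Matrix.one_apply, bar, mul_ite, ite_mul,
      Finset.sum_ite_eq, Finset.sum_ite_eq']

lemma sumJ_right (v : Fin k ⊕ Fin k → ℂ) (q : Fin k ⊕ Fin k) :
    ∑ c, v c * Jmat k c q = -(bar v q) := by
  cases q <;>
    simp [Jmat, Fintype.sum_sum_type, Matrix.one_apply, bar, mul_ite, ite_mul,
      Finset.sum_ite_eq, Finset.sum_ite_eq']

lemma Jmul_vecMulVec (v w : Fin k ⊕ Fin k → ℂ) :
    Jmat k * Matrix.vecMulVec v w = Matrix.vecMulVec (bar v) w := by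
  ext p q
  simp only [Matrix.mul_apply, Matrix.vecMulVec_apply, ← mul_assoc, ← Finset.sum_mul,
    sumJ_left]

lemma vecMulVec_mulJ (v w : Fin k ⊕ Fin k → ℂ) :
    Matrix.vecMulVec v w * Jmat k = -(Matrix.vecMulVec v (bar w)) := by
  ext p q
  simp only [Matrix.mul_apply, Matrix.vecMulVec_apply, mul_assoc, ← Finset.mul_sum,
    sumJ_right, Matrix.neg_apply, mul_neg]

lemma vecMulVec_transpose (v w : Fin k ⊕ Fin k → ℂ) :
    (Matrix.vecMulVec v w)ᵀ = Matrix.vecMulVec w v := by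
  ext p q
  simp [Matrix.vecMulVec_apply, mul_comm]

/-- symmetrized outer product -/
def phi (x y : Fin k ⊕ Fin k → ℂ) : Matrix (Fin k ⊕ Fin k) (Fin k ⊕ Fin k) ℂ :=
  Matrix.vecMulVec x (bar y) + Matrix.vecMulVec y (bar x)

lemma polar (x y : Fin k ⊕ Fin k → ℂ) :
    Matrix.vecMulVec (x + y) (bar (x + y)) =
      Matrix.vecMulVec x (bar x) + Matrix.vecMulVec y (bar y) + phi x y := by
  ext p q
  simp [phi, Matrix.vecMulVec_apply, bar_add, Matrix.add_apply]
  ring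

lemma phi_add_left (x x' y : Fin k ⊕ Fin k → ℂ) :
    phi (x + x') y = phi x y + phi x' y := by
  ext p q
  simp [phi, Matrix.vecMulVec_apply, bar_add, Matrix.add_apply]
  ring

lemma phi_smul_left (c : ℂ) (x y : Fin k ⊕ Fin k → ℂ) :
    phi (c • x) y = c • phi x y := by
  ext p q
  have hb : bar (c • x) = c • bar x := by funext p; cases p <;> simp [bar] <;> ring
  simp [phi, Matrix.vecMulVec_apply, hb, Matrix.add_apply, Matrix.smul_apply, smul_eq_mul]
  ring

lemma phi_comm (x y : Fin k ⊕ Fin k → ℂ) : phi x y = phi y x := by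
  simp [phi, add_comm]

lemma phi_add_right (x y y' : Fin k ⊕ Fin k → ℂ) :
    phi x (y + y') = phi x y + phi x y' := by
  rw [phi_comm, phi_add_left, phi_comm y x, phi_comm y' x]

lemma phi_smul_right (c : ℂ) (x y : Fin k ⊕ Fin k → ℂ) :
    phi x (c • y) = c • phi x y := by
  rw [phi_comm, phi_smul_left, phi_comm]

lemma phi_zero_left (y : Fin k ⊕ Fin k → ℂ) : phi 0 y = 0 := by
  ext p q
  simp [phi, Matrix.vecMulVec_apply, bar]

lemma phi_zero_right (x : Fin k ⊕ Fin k → ℂ) : phi x 0 = 0 := by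
  rw [phi_comm, phi_zero_left]

end Stmt12Aux

open Stmt12Aux in
/-- the `ℂ`-span of the outer products `r·r̄ᵀ`, for `r` ranging over the
lattice `Γ = {r ∈ ℤ^{2k} : m_i ∣ r_i}`, is the full symplectic Lie algebra
`𝔰𝔭_{2k}(ℂ) = {A : Aᵀ J + J A = 0}`. -/
theorem stmt12 (k : ℕ) (hk : 1 ≤ k) (m : Fin k ⊕ Fin k → ℕ) (hm : ∀ i, 0 < m i) :
    (Submodule.span ℂ
        {A : Matrix (Fin k ⊕ Fin k) (Fin k ⊕ Fin k) ℂ |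
          ∃ r : Fin k ⊕ Fin k → ℤ, (∀ i, (m i : ℤ) ∣ r i) ∧
            A = Matrix.vecMulVec (fun i => (r i : ℂ)) (bar fun i => (r i : ℂ))} :
      Set (Matrix (Fin k ⊕ Fin k) (Fin k ⊕ Fin k) ℂ))
      = {A | Aᵀ * Jmat k + Jmat k * A = 0} := by
  classical
  set Sgen : Set (Matrix (Fin k ⊕ Fin k) (Fin k ⊕ Fin k) ℂ) :=
    {A : Matrix (Fin k ⊕ Fin k) (Fin k ⊕ Fin k) ℂ |
      ∃ r : Fin k ⊕ Fin k → ℤ, (∀ i, (m i : ℤ) ∣ r i) ∧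
        A = Matrix.vecMulVec (fun i => (r i : ℂ)) (bar fun i => (r i : ℂ))} with hSgen
  set W := Submodule.span ℂ Sgen with hW
  apply Set.eq_of_subset_of_subset
  · -- span ⊆ sp
    intro A hA
    rw [SetLike.mem_coe] at hA
    have base : ∀ B ∈ Sgen, Bᵀ * Jmat k + Jmat k * B = 0 := by
      rintro B ⟨r, -, rfl⟩
      rw [vecMulVec_transpose, vecMulVec_mulJ, Jmul_vecMulVec]
      simp
    show A ∈ {A : Matrix (Fin k ⊕ Fin k) (Fin k ⊕ Fin k) ℂ | Aᵀ * Jmat k + Jmat k * A = 0}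
    refine Submodule.span_induction (p := fun B _ => Bᵀ * Jmat k + Jmat k * B = 0)
      (fun B hB => base B hB) (by simp) ?_ ?_ hA
    · intro B C _ _ hB hC
      have h : (B + C)ᵀ * Jmat k + Jmat k * (B + C)
          = (Bᵀ * Jmat k + Jmat k * B) + (Cᵀ * Jmat k + Jmat k * C) := by
        simp only [Matrix.transpose_add, add_mul, mul_add]; abel
      show (B + C)ᵀ * Jmat k + Jmat k * (B + C) = 0
      rw [h, hB, hC, add_zero]
    · intro c B _ hB
      have h : (c • B)ᵀ * Jmat k + Jmat k * (c • B) = c • (Bᵀ * Jmat k + Jmat k * B) := by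
        simp [Matrix.transpose_smul, smul_add, Matrix.smul_mul, Matrix.mul_smul]
      show (c • B)ᵀ * Jmat k + Jmat k * (c • B) = 0
      rw [h, hB, smul_zero]
  · -- sp ⊆ span
    intro A hA
    simp only [Set.mem_setOf_eq] at hA
    set e : Fin k ⊕ Fin k → (Fin k ⊕ Fin k → ℂ) := fun a => Pi.single a 1 with he
    have he_apply : ∀ a b, e a b = if b = a then (1:ℂ) else 0 := by
      intro a b; simp [he, Pi.single_apply]
    have hglat : ∀ r : Fin k ⊕ Fin k → ℤ, (∀ i, (m i : ℤ) ∣ r i) →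
        Matrix.vecMulVec (fun i => (r i : ℂ)) (bar fun i => (r i : ℂ)) ∈ W := by
      intro r hr
      exact Submodule.subset_span ⟨r, hr, rfl⟩
    have hphilat : ∀ r s : Fin k ⊕ Fin k → ℤ,
        (∀ i, (m i : ℤ) ∣ r i) → (∀ i, (m i : ℤ) ∣ s i) →
        phi (fun i => (r i : ℂ)) (fun i => (s i : ℂ)) ∈ W := by
      intro r s hr hs
      have h1 := hglat (r + s) (fun i => dvd_add (hr i) (hs i))
      rw [show ((fun i => (((r + s) i : ℤ) : ℂ)) : Fin k ⊕ Fin k → ℂ)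
          = (fun i => (r i : ℂ)) + (fun i => (s i : ℂ)) by
        funext i; simp only [Pi.add_apply]; push_cast; ring] at h1
      have h2 := hglat r hr
      have h3 := hglat s hs
      have heq : phi (fun i => (r i : ℂ)) (fun i => (s i : ℂ))
          = (Matrix.vecMulVec ((fun i => (r i : ℂ)) + fun i => (s i : ℂ))
              (bar ((fun i => (r i : ℂ)) + fun i => (s i : ℂ))))
            - Matrix.vecMulVec (fun i => (r i : ℂ)) (bar fun i => (r i : ℂ))
            - Matrix.vecMulVec (fun i => (s i : ℂ)) (bar fun i => (s i : ℂ)) := by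
        rw [polar]; abel
      rw [heq]
      exact Submodule.sub_mem W (Submodule.sub_mem W h1 h2) h3
    -- the lattice spans everything
    have hT : Submodule.span ℂ {x : Fin k ⊕ Fin k → ℂ |
        ∃ r : Fin k ⊕ Fin k → ℤ, (∀ i, (m i : ℤ) ∣ r i) ∧ x = fun i => (r i : ℂ)} = ⊤ := by
      rw [eq_top_iff]
      intro x _
      have hx : x = ∑ a : Fin k ⊕ Fin k, x a • e a := by
        funext b
        simp [he_apply, Finset.sum_ite_eq, Finset.sum_ite_eq', mul_comm]
      rw [hx]
      refine Submodule.sum_mem _ (fun a _ => Submodule.smul_mem _ _ ?_)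
      have hma : ((m a : ℂ)) ≠ 0 := by exact_mod_cast (hm a).ne'
      have hmem : ((fun i => (((if i = a then (m a : ℤ) else 0) : ℤ) : ℂ)) : Fin k ⊕ Fin k → ℂ)
          ∈ {x : Fin k ⊕ Fin k → ℂ |
              ∃ r : Fin k ⊕ Fin k → ℤ, (∀ i, (m i : ℤ) ∣ r i) ∧ x = fun i => (r i : ℂ)} := by
        refine ⟨fun b => if b = a then (m a : ℤ) else 0, fun i => ?_, rfl⟩
        by_cases h : i = a <;> simp [h]
      have hsm := Submodule.smul_mem (Submodule.span ℂ {x : Fin k ⊕ Fin k → ℂ |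
          ∃ r : Fin k ⊕ Fin k → ℤ, (∀ i, (m i : ℤ) ∣ r i) ∧ x = fun i => (r i : ℂ)})
        ((m a : ℂ))⁻¹ (Submodule.subset_span hmem)
      have heq : ((m a : ℂ))⁻¹ •
          ((fun i => (((if i = a then (m a : ℤ) else 0) : ℤ) : ℂ)) : Fin k ⊕ Fin k → ℂ)
          = e a := by
        funext b
        by_cases h : b = a <;> simp [he_apply, h, hma]
      rwa [heq] at hsm
    -- phi of arbitrary vectors is in W
    have hphiall : ∀ x y : Fin k ⊕ Fin k → ℂ, phi x y ∈ W := by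
      have key : ∀ x ∈ Submodule.span ℂ {x : Fin k ⊕ Fin k → ℂ |
          ∃ r : Fin k ⊕ Fin k → ℤ, (∀ i, (m i : ℤ) ∣ r i) ∧ x = fun i => (r i : ℂ)},
          ∀ y ∈ Submodule.span ℂ {x : Fin k ⊕ Fin k → ℂ |
          ∃ r : Fin k ⊕ Fin k → ℤ, (∀ i, (m i : ℤ) ∣ r i) ∧ x = fun i => (r i : ℂ)},
          phi x y ∈ W := by
        intro x hx
        refine Submodule.span_induction (p := fun x _ => ∀ y ∈ _, phi x y ∈ W) ?_ ?_ ?_ ?_ hx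
        · rintro x ⟨r, hr, rfl⟩ y hy
          refine Submodule.span_induction (p := fun y _ => phi (fun i => ((r i : ℤ) : ℂ)) y ∈ W) ?_ ?_ ?_ ?_ hy
          · rintro y ⟨s, hs, rfl⟩
            exact hphilat r s hr hs
          · show phi (fun i => ((r i : ℤ) : ℂ)) 0 ∈ W
            rw [phi_zero_right]; exact Submodule.zero_mem W
          · intro y z _ _ hy hz
            show phi (fun i => ((r i : ℤ) : ℂ)) (y + z) ∈ W
            rw [phi_add_right]
            exact Submodule.add_mem W hy hz
          · intro c y _ hy
            show phi (fun i => ((r i : ℤ) : ℂ)) (c • y) ∈ W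
            rw [phi_smul_right]
            exact Submodule.smul_mem W c hy
        · intro y _
          show phi 0 y ∈ W
          rw [phi_zero_left]; exact Submodule.zero_mem W
        · intro x x' _ _ hx hx' y hy
          show phi (x + x') y ∈ W
          rw [phi_add_left]
          exact Submodule.add_mem W (hx y hy) (hx' y hy)
        · intro c x _ hx y hy
          show phi (c • x) y ∈ W
          rw [phi_smul_left]
          exact Submodule.smul_mem W c (hx y hy)
      intro x y
      exact key x (by rw [hT]; trivial) y (by rw [hT]; trivial)
    -- decompose A
    set S : Matrix (Fin k ⊕ Fin k) (Fin k ⊕ Fin k) ℂ :=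
      fun a b => bar (fun c => A c b) a with hS
    set X : Fin k ⊕ Fin k → Fin k ⊕ Fin k → ℂ :=
      fun a => -(bar (e a)) with hX
    set Y : Fin k ⊕ Fin k → Fin k ⊕ Fin k → ℂ := fun a => -(bar (S a)) with hY
    -- symmetry of S from the symplectic condition
    have hsym : ∀ p q, S p q = S q p := by
      intro p q
      have h0 := congrFun (congrFun hA p) q
      simp only [Matrix.add_apply, Matrix.mul_apply, Matrix.transpose_apply,
        Matrix.zero_apply] at h0
      rw [sumJ_left (fun c => A c q) p] at h0
      rw [show (∑ c, A c p * Jmat k c q) = -(bar (fun c => A c p) q) from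
        sumJ_right (fun c => A c p) q] at h0
      have h1 : bar (fun c => A c q) p = bar (fun c => A c p) q := by
        linear_combination h0
      show bar (fun c => A c q) p = bar (fun c => A c p) q
      exact h1
    have hbarX : ∀ a, bar (X a) = e a := by
      intro a
      rw [hX]
      simp only [bar_neg, bar_bar, neg_neg]
    have hbarY : ∀ a, bar (Y a) = S a := by
      intro a
      rw [hY]
      simp only [bar_neg, bar_bar, neg_neg]
    have hXS : ∀ p q, (∑ a, X a p * S a q) = A p q := by
      intro p q
      cases p with
      | inl i =>
        have hXv : ∀ a, X a (Sum.inl i) = -(e a (Sum.inr i)) := fun a => rfl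
        have hsum : (∑ a, X a (Sum.inl i) * S a q) = -(S (Sum.inr i) q) := by
          simp [hXv, he_apply, ite_mul, Finset.sum_ite_eq, Finset.sum_ite_eq']
        rw [hsum]
        show -(bar (fun c => A c q) (Sum.inr i)) = A (Sum.inl i) q
        simp [bar]
      | inr i =>
        have hXv : ∀ a, X a (Sum.inr i) = e a (Sum.inl i) := fun a => by
          show -(bar (e a) (Sum.inr i)) = e a (Sum.inl i)
          show -(-(e a (Sum.inl i))) = e a (Sum.inl i)
          rw [neg_neg]
        have hsum : (∑ a, X a (Sum.inr i) * S a q) = S (Sum.inl i) q := by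
          simp [hXv, he_apply, ite_mul, Finset.sum_ite_eq, Finset.sum_ite_eq']
        rw [hsum]
        show bar (fun c => A c q) (Sum.inl i) = A (Sum.inr i) q
        simp [bar]
    have hYA : ∀ p q, Y q p = A p q := by
      intro p q
      cases p with
      | inl i =>
        show -(bar (S q) (Sum.inl i)) = A (Sum.inl i) q
        have : bar (S q) (Sum.inl i) = S q (Sum.inr i) := rfl
        rw [this, ← hsym]
        show -(bar (fun c => A c q) (Sum.inr i)) = A (Sum.inl i) q
        simp [bar]
      | inr i =>
        show -(bar (S q) (Sum.inr i)) = A (Sum.inr i) q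
        have : bar (S q) (Sum.inr i) = -(S q (Sum.inl i)) := rfl
        rw [this, neg_neg, ← hsym]
        show bar (fun c => A c q) (Sum.inl i) = A (Sum.inr i) q
        simp [bar]
    have hdecomp : A = ∑ a : Fin k ⊕ Fin k, (2⁻¹ : ℂ) • phi (X a) (Y a) := by
      have hphia : ∀ a, phi (X a) (Y a)
          = Matrix.vecMulVec (X a) (S a) + Matrix.vecMulVec (Y a) (e a) := by
        intro a
        rw [phi, hbarY, hbarX]
      ext p q
      rw [Matrix.sum_apply]
      simp only [hphia, Matrix.smul_apply, Matrix.add_apply, Matrix.vecMulVec_apply,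
        smul_eq_mul]
      rw [← Finset.mul_sum, Finset.sum_add_distrib, hXS]
      have h2 : (∑ a, Y a p * e a q) = Y q p := by
        simp [he_apply, mul_ite, Finset.sum_ite_eq, Finset.sum_ite_eq']
      rw [h2, hYA]
      ring
    rw [SetLike.mem_coe, hdecomp]
    exact Submodule.sum_mem _ (fun a _ => Submodule.smul_mem _ _ (hphiall _ _))
end
end
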